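/- For every nonnegative integer n and all real (or polynomial variables) y and z, ∑_{r=0}^{n} w̃_{n,r}(y)·z^r = ∑_{r=0}^{n} C(n,r)·φ_r((z−1)·y)·w_{n−r}(y), and also ∑_{r=0}^{n} w̃_{n,r}(y)·z^r = ∑_{r=0}^{n} C(n,r)·φ_r(z·y)·w̃_{n−r}(y). -/

import Mathlib

/-- Stirling numbers of the second kind. -/
def stirling2 : ℕ → ℕ → ℕ
  | 0, 0 => 1
  | 0, _ + 1 => 0
  | _ + 1, 0 => 0
  | n + 1, k + 1 => (k + 1) * stirling2 n (k + 1) + stirling2 n k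

/-- Derangement numbers `d_n = n! ∑_{i=0}^n (-1)^i / i!`. -/
noncomputable def derang (n : ℕ) : ℝ :=
  (n.factorial : ℝ) * ∑ i ∈ Finset.range (n + 1), (-1 : ℝ) ^ i / (i.factorial : ℝ)

/-- Partial derangement numbers `d_{n,r}`. -/
noncomputable def pderang (n r : ℕ) : ℝ :=
  if r ≤ n then (n.choose r : ℝ) * derang (n - r) else 0

/-- Partial deranged Bell polynomials `w̃_{n,r}(y)`. -/
noncomputable def pdbPoly (n r : ℕ) (y : ℝ) : ℝ :=
  ∑ k ∈ Finset.range (n + 1), (stirling2 n k : ℝ) * pderang k r * y ^ k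

/-- Exponential polynomials `φ_n(y) = ∑_{k=0}^n {n brace k} y^k`. -/
def expPoly (n : ℕ) (y : ℝ) : ℝ :=
  ∑ k ∈ Finset.range (n + 1), (stirling2 n k : ℝ) * y ^ k

/-- Geometric polynomials `w_n(y) = ∑_{k=0}^n {n brace k} k! y^k`. -/
def geomPoly (n : ℕ) (y : ℝ) : ℝ :=
  ∑ k ∈ Finset.range (n + 1), (stirling2 n k : ℝ) * (k.factorial : ℝ) * y ^ k

open Finset


lemma stirling2_succ_succ (n k : ℕ) :
    stirling2 (n+1) (k+1) = (k+1) * stirling2 n (k+1) + stirling2 n k := rfl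

lemma stirling2_succ_zero (n : ℕ) : stirling2 (n+1) 0 = 0 := rfl

lemma stirling2_eq_zero_of_lt : ∀ {n k : ℕ}, n < k → stirling2 n k = 0
  | 0, _+1, _ => rfl
  | n+1, k+1, h => by
    rw [stirling2_succ_succ, stirling2_eq_zero_of_lt (by omega : n < k+1),
      stirling2_eq_zero_of_lt (by omega : n < k), Nat.mul_zero]

lemma stirling2_vandermonde (n a b : ℕ) :
    ∑ r ∈ range (n+1), n.choose r * stirling2 r a * stirling2 (n-r) b
      = (a+b).choose a * stirling2 n (a+b) := by
  induction n generalizing a b with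
  | zero =>
    match a, b with
    | 0, 0 => simp [stirling2]
    | a+1, b =>
      have : a + 1 + b = (a + b) + 1 := by omega
      simp [stirling2, this]
    | 0, b+1 => simp [stirling2]
  | succ n ih =>
    have hsplit : ∑ r ∈ range (n+1+1), (n+1).choose r * stirling2 r a * stirling2 (n+1-r) b
        = (∑ r ∈ range (n+1), n.choose r * stirling2 (r+1) a * stirling2 (n-r) b)
          + ∑ r ∈ range (n+1), n.choose r * stirling2 r a * stirling2 ((n-r)+1) b := by
      rw [Finset.sum_range_succ']
      have e1 : ∀ r, (n+1).choose (r+1) * stirling2 (r+1) a * stirling2 (n+1-(r+1)) b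
          = n.choose r * stirling2 (r+1) a * stirling2 (n-r) b
            + n.choose (r+1) * stirling2 (r+1) a * stirling2 (n-r) b := by
        intro r
        rw [Nat.choose_succ_succ, Nat.succ_sub_succ, Nat.add_mul, Nat.add_mul]
      simp only [e1]
      rw [Finset.sum_add_distrib]
      have e2 : (∑ r ∈ range (n+1), n.choose (r+1) * stirling2 (r+1) a * stirling2 (n-r) b)
            + (n+1).choose 0 * stirling2 0 a * stirling2 (n+1-0) b
          = ∑ r ∈ range (n+1), n.choose r * stirling2 r a * stirling2 ((n-r)+1) b := by
        have := (Finset.sum_range_succ'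
          (fun r => n.choose r * stirling2 r a * stirling2 (n+1-r) b) (n+1)).symm
        simp only [Nat.succ_sub_succ, Nat.sub_zero, Nat.choose_zero_right] at this ⊢
        rw [this, Finset.sum_range_succ, Nat.choose_succ_self, Nat.zero_mul, Nat.zero_mul,
          Nat.add_zero]
        refine Finset.sum_congr rfl fun r hr => ?_
        rw [Nat.succ_sub (by simp at hr; omega : r ≤ n)]
      rw [Nat.add_assoc, e2]
    rw [hsplit]
    match a, b with
    | 0, 0 =>
      simp [stirling2_succ_zero, stirling2_eq_zero_of_lt]
    | 0, b+1 =>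
      have hA : ∑ r ∈ range (n+1), n.choose r * stirling2 (r+1) 0 * stirling2 (n-r) (b+1) = 0 := by
        simp [stirling2_succ_zero]
      have hB : ∑ r ∈ range (n+1), n.choose r * stirling2 r 0 * stirling2 ((n-r)+1) (b+1)
          = (b+1) * ((0+(b+1)).choose 0 * stirling2 n (0+(b+1)))
            + (0+b).choose 0 * stirling2 n (0+b) := by
        rw [← ih 0 (b+1), ← ih 0 b, Finset.mul_sum, ← Finset.sum_add_distrib]
        refine Finset.sum_congr rfl fun r _ => ?_
        rw [stirling2_succ_succ]; ring
      rw [hA, hB]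
      simp only [Nat.zero_add, Nat.choose_zero_right, Nat.one_mul, stirling2_succ_succ]
    | a+1, 0 =>
      have hB : ∑ r ∈ range (n+1), n.choose r * stirling2 r (a+1) * stirling2 ((n-r)+1) 0 = 0 := by
        simp [stirling2_succ_zero]
      have hA : ∑ r ∈ range (n+1), n.choose r * stirling2 (r+1) (a+1) * stirling2 (n-r) 0
          = (a+1) * (((a+1)+0).choose (a+1) * stirling2 n ((a+1)+0))
            + (a+0).choose a * stirling2 n (a+0) := by
        rw [← ih (a+1) 0, ← ih a 0, Finset.mul_sum, ← Finset.sum_add_distrib]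
        refine Finset.sum_congr rfl fun r _ => ?_
        rw [stirling2_succ_succ]; ring
      rw [hA, hB]
      simp only [Nat.add_zero, Nat.choose_self, Nat.one_mul, stirling2_succ_succ]
    | a+1, b+1 =>
      have hA : ∑ r ∈ range (n+1), n.choose r * stirling2 (r+1) (a+1) * stirling2 (n-r) (b+1)
          = (a+1) * (((a+1)+(b+1)).choose (a+1) * stirling2 n ((a+1)+(b+1)))
            + (a+(b+1)).choose a * stirling2 n (a+(b+1)) := by
        rw [← ih (a+1) (b+1), ← ih a (b+1), Finset.mul_sum, ← Finset.sum_add_distrib]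
        refine Finset.sum_congr rfl fun r _ => ?_
        rw [stirling2_succ_succ]; ring
      have hB : ∑ r ∈ range (n+1), n.choose r * stirling2 r (a+1) * stirling2 ((n-r)+1) (b+1)
          = (b+1) * (((a+1)+(b+1)).choose (a+1) * stirling2 n ((a+1)+(b+1)))
            + ((a+1)+b).choose (a+1) * stirling2 n ((a+1)+b) := by
        rw [← ih (a+1) (b+1), ← ih (a+1) b, Finset.mul_sum, ← Finset.sum_add_distrib]
        refine Finset.sum_congr rfl fun r _ => ?_
        rw [stirling2_succ_succ]; ring
      rw [hA, hB]
      have h1 : a + 1 + (b + 1) = (a + (b+1)) + 1 := by omega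
      have h2 : a + 1 + b = a + (b+1) := by omega
      rw [h1, h2, stirling2_succ_succ, Nat.choose_succ_succ (a+(b+1)) a]
      ring


lemma derang_eq (m : ℕ) :
    derang m = ∑ i ∈ range (m+1), (-1:ℝ)^i * (m.choose i : ℝ) * ((m-i).factorial : ℝ) := by
  unfold derang
  rw [Finset.mul_sum]
  refine Finset.sum_congr rfl fun i hi => ?_
  have hi' : i ≤ m := by simp at hi; omega
  have h : (m.factorial : ℝ) = (m.choose i : ℝ) * (i.factorial : ℝ) * ((m-i).factorial : ℝ) := by
    exact_mod_cast (Nat.choose_mul_factorial_mul_factorial hi').symm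
  have hfac : (i.factorial : ℝ) ≠ 0 := by
    exact_mod_cast i.factorial_ne_zero
  rw [h]
  field_simp

lemma conv_derang (k : ℕ) (z : ℝ) :
    ∑ r ∈ range (k+1), (k.choose r : ℝ) * derang (k-r) * z^r
      = ∑ j ∈ range (k+1), (k.choose j : ℝ) * (z-1)^j * ((k-j).factorial : ℝ) := by
  have expand : ∀ j : ℕ, (z-1)^j = ∑ r ∈ range (j+1), z^r * (-1:ℝ)^(j-r) * (j.choose r : ℝ) := by
    intro j
    rw [sub_eq_add_neg, add_pow]
  symm
  calc ∑ j ∈ range (k+1), (k.choose j : ℝ) * (z-1)^j * ((k-j).factorial : ℝ)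
      = ∑ j ∈ range (k+1), ∑ r ∈ range (k+1),
          (k.choose j : ℝ) * (z^r * (-1:ℝ)^(j-r) * (j.choose r : ℝ)) * ((k-j).factorial : ℝ) := by
        refine Finset.sum_congr rfl fun j hj => ?_
        rw [expand j, Finset.mul_sum, Finset.sum_mul]
        refine Finset.sum_subset (Finset.range_subset_range.2 (by simp at hj; omega : j+1 ≤ k+1))
          (fun r _ hr => ?_)
        have : j < r := by simp at hr; omega
        rw [Nat.choose_eq_zero_of_lt this]
        push_cast; ring
    _ = ∑ r ∈ range (k+1), ∑ j ∈ range (k+1),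
          (k.choose j : ℝ) * (z^r * (-1:ℝ)^(j-r) * (j.choose r : ℝ)) * ((k-j).factorial : ℝ) :=
        Finset.sum_comm
    _ = ∑ r ∈ range (k+1), (k.choose r : ℝ) * derang (k-r) * z^r := by
        refine Finset.sum_congr rfl fun r hr => ?_
        have hrk : r ≤ k := by simp at hr; omega
        rw [show ∑ j ∈ range (k+1),
              (k.choose j : ℝ) * (z^r * (-1:ℝ)^(j-r) * (j.choose r : ℝ)) * ((k-j).factorial : ℝ)
            = ∑ j ∈ Finset.Ico r (k+1),
              (k.choose j : ℝ) * (z^r * (-1:ℝ)^(j-r) * (j.choose r : ℝ)) * ((k-j).factorial : ℝ)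
          from (Finset.sum_subset (by rw [Finset.range_eq_Ico]; exact Finset.Ico_subset_Ico (Nat.zero_le r) le_rfl)
            (fun j hjr hj => by
              have hlt : j < r := by simp at hjr hj; omega
              rw [Nat.choose_eq_zero_of_lt hlt]; push_cast; ring)).symm]
        rw [Finset.sum_Ico_eq_sum_range]
        have hkr : k + 1 - r = (k - r) + 1 := by omega
        rw [hkr, derang_eq (k-r), Finset.mul_sum, Finset.sum_mul]
        refine Finset.sum_congr rfl fun i hi => ?_
        have hik : r + i ≤ k := by simp at hi; omega
        have hcc : (k.choose (r+i) : ℝ) * ((r+i).choose r : ℝ)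
            = (k.choose r : ℝ) * ((k-r).choose i : ℝ) := by
          have := Nat.choose_mul (n := k) (by omega : r ≤ r + i)
          have h2 : r + i - r = i := by omega
          rw [h2] at this
          exact_mod_cast this
        have h3 : r + i - r = i := by omega
        have h4 : k - (r + i) = (k - r) - i := by omega
        rw [h3, h4]
        calc (k.choose (r+i) : ℝ) * (z^r * (-1:ℝ)^i * ((r+i).choose r : ℝ)) * (((k-r)-i).factorial : ℝ)
            = ((k.choose (r+i) : ℝ) * ((r+i).choose r : ℝ)) * (z^r * (-1:ℝ)^i * (((k-r)-i).factorial : ℝ)) := by ring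
          _ = ((k.choose r : ℝ) * ((k-r).choose i : ℝ)) * (z^r * (-1:ℝ)^i * (((k-r)-i).factorial : ℝ)) := by rw [hcc]
          _ = (k.choose r : ℝ) * ((-1:ℝ)^i * ((k-r).choose i : ℝ) * (((k-r)-i).factorial : ℝ)) * z^r := by ring


lemma key_sum (n : ℕ) (y : ℝ) (α β : ℕ → ℝ) :
    ∑ r ∈ range (n+1), (n.choose r : ℝ) *
        (∑ a ∈ range (r+1), (stirling2 r a : ℝ) * α a * y^a) *
        (∑ b ∈ range (n-r+1), (stirling2 (n-r) b : ℝ) * β b * y^b)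
      = ∑ k ∈ range (n+1), (stirling2 n k : ℝ) * y^k *
          ∑ j ∈ range (k+1), (k.choose j : ℝ) * α j * β (k-j) := by
  calc ∑ r ∈ range (n+1), (n.choose r : ℝ) *
        (∑ a ∈ range (r+1), (stirling2 r a : ℝ) * α a * y^a) *
        (∑ b ∈ range (n-r+1), (stirling2 (n-r) b : ℝ) * β b * y^b)
      = ∑ r ∈ range (n+1), ∑ a ∈ range (n+1), ∑ b ∈ range (n+1),
          (n.choose r : ℝ) * (((stirling2 r a : ℝ) * α a * y^a) *
            ((stirling2 (n-r) b : ℝ) * β b * y^b)) := by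
        refine Finset.sum_congr rfl fun r hr => ?_
        have hr' : r ≤ n := by simp at hr; omega
        rw [show (∑ a ∈ range (r+1), (stirling2 r a : ℝ) * α a * y^a)
              = ∑ a ∈ range (n+1), (stirling2 r a : ℝ) * α a * y^a from
            Finset.sum_subset (Finset.range_subset_range.2 (by omega))
              (fun a _ ha => by
                rw [stirling2_eq_zero_of_lt (by simp at ha; omega : r < a)]
                push_cast; ring),
          show (∑ b ∈ range (n-r+1), (stirling2 (n-r) b : ℝ) * β b * y^b)
              = ∑ b ∈ range (n+1), (stirling2 (n-r) b : ℝ) * β b * y^b from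
            Finset.sum_subset (Finset.range_subset_range.2 (by omega))
              (fun b _ hb => by
                rw [stirling2_eq_zero_of_lt (by simp at hb; omega : n - r < b)]
                push_cast; ring),
          mul_assoc, Finset.sum_mul_sum]
        simp only [Finset.mul_sum]
    _ = ∑ a ∈ range (n+1), ∑ b ∈ range (n+1),
          (α a * β b * y^(a+b)) * (((a+b).choose a : ℝ) * (stirling2 n (a+b) : ℝ)) := by
        rw [Finset.sum_comm]
        refine Finset.sum_congr rfl fun a _ => ?_
        rw [Finset.sum_comm]
        refine Finset.sum_congr rfl fun b _ => ?_
        have hv : ((∑ r ∈ range (n+1), n.choose r * stirling2 r a * stirling2 (n-r) b : ℕ) : ℝ)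
            = (((a+b).choose a * stirling2 n (a+b) : ℕ) : ℝ) := by
          rw [stirling2_vandermonde]
        push_cast at hv
        calc ∑ r ∈ range (n+1), (n.choose r : ℝ) * (((stirling2 r a : ℝ) * α a * y^a) *
                ((stirling2 (n-r) b : ℝ) * β b * y^b))
            = (α a * β b * y^(a+b)) *
                ∑ r ∈ range (n+1), (n.choose r : ℝ) * (stirling2 r a : ℝ) * (stirling2 (n-r) b : ℝ) := by
              rw [Finset.mul_sum]
              refine Finset.sum_congr rfl fun r _ => ?_
              rw [pow_add]; ring
          _ = (α a * β b * y^(a+b)) * (((a+b).choose a : ℝ) * (stirling2 n (a+b) : ℝ)) := by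
              rw [hv]
    _ = ∑ a ∈ range (n+1), ∑ b ∈ range (n+1-a),
          (α a * β b * y^(a+b)) * (((a+b).choose a : ℝ) * (stirling2 n (a+b) : ℝ)) := by
        refine Finset.sum_congr rfl fun a ha => ?_
        refine (Finset.sum_subset (Finset.range_subset_range.2 (by omega)) (fun b _ hb => ?_)).symm
        have : n < a + b := by simp at ha hb; omega
        rw [stirling2_eq_zero_of_lt this]
        push_cast; ring
    _ = ∑ k ∈ range (n+1), ∑ j ∈ range (k+1),
          (α j * β (k-j) * y^(j+(k-j))) * (((j+(k-j)).choose j : ℝ) * (stirling2 n (j+(k-j)) : ℝ)) :=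
        (Finset.sum_range_diag_flip (n+1)
          (fun a b => (α a * β b * y^(a+b)) * (((a+b).choose a : ℝ) * (stirling2 n (a+b) : ℝ)))).symm
    _ = ∑ k ∈ range (n+1), (stirling2 n k : ℝ) * y^k *
          ∑ j ∈ range (k+1), (k.choose j : ℝ) * α j * β (k-j) := by
        refine Finset.sum_congr rfl fun k _ => ?_
        rw [Finset.mul_sum]
        refine Finset.sum_congr rfl fun j hj => ?_
        have : j + (k - j) = k := by simp at hj; omega
        rw [this]; ring


lemma lhs_eq (n : ℕ) (y z : ℝ) :
    ∑ r ∈ range (n+1), pdbPoly n r y * z ^ r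
      = ∑ k ∈ range (n+1), (stirling2 n k : ℝ) * y^k *
          ∑ j ∈ range (k+1), (k.choose j : ℝ) * derang (k-j) * z^j := by
  unfold pdbPoly
  simp only [Finset.sum_mul]
  rw [Finset.sum_comm]
  refine Finset.sum_congr rfl fun k hk => ?_
  have hk' : k ≤ n := by simp at hk; omega
  rw [Finset.mul_sum]
  refine ((Finset.sum_subset (Finset.range_subset_range.2 (by omega : k+1 ≤ n+1))
    (fun r _ hr => ?_)).symm.trans (Finset.sum_congr rfl fun r hr => ?_))
  · have hlt : ¬ r ≤ k := by simp at hr; omega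
    unfold pderang
    rw [if_neg hlt]
    ring
  · have hrk : r ≤ k := by simp at hr; omega
    unfold pderang
    rw [if_pos hrk]
    ring

/-- `∑_{r=0}^n w̃_{n,r}(y) z^r = ∑_{r=0}^n C(n,r) φ_r((z-1)y) w_{n-r}(y)` and
`∑_{r=0}^n w̃_{n,r}(y) z^r = ∑_{r=0}^n C(n,r) φ_r(zy) w̃_{n-r}(y)`. -/
theorem sum_pdbPoly_mul_pow_eq (n : ℕ) (y z : ℝ) :
    (∑ r ∈ Finset.range (n + 1), pdbPoly n r y * z ^ r =
      ∑ r ∈ Finset.range (n + 1),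
        (n.choose r : ℝ) * expPoly r ((z - 1) * y) * geomPoly (n - r) y) ∧
    (∑ r ∈ Finset.range (n + 1), pdbPoly n r y * z ^ r =
      ∑ r ∈ Finset.range (n + 1),
        (n.choose r : ℝ) * expPoly r (z * y) * pdbPoly (n - r) 0 y) := by
  constructor
  · rw [lhs_eq]
    have hkey := key_sum n y (fun a => (z-1)^a) (fun b => (b.factorial : ℝ))
    rw [show ∑ r ∈ Finset.range (n + 1),
          (n.choose r : ℝ) * expPoly r ((z - 1) * y) * geomPoly (n - r) y
        = ∑ r ∈ range (n+1), (n.choose r : ℝ) *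
            (∑ a ∈ range (r+1), (stirling2 r a : ℝ) * (z-1)^a * y^a) *
            (∑ b ∈ range (n-r+1), (stirling2 (n-r) b : ℝ) * (b.factorial : ℝ) * y^b) from
      Finset.sum_congr rfl fun r _ => by
        unfold expPoly geomPoly
        congr 1
        congr 1
        refine Finset.sum_congr rfl fun a _ => ?_
        rw [mul_pow]; ring]
    rw [hkey]
    refine Finset.sum_congr rfl fun k _ => ?_
    rw [conv_derang k z]
  · rw [lhs_eq]
    have hkey := key_sum n y (fun a => z^a) (fun b => derang b)
    rw [show ∑ r ∈ Finset.range (n + 1),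
          (n.choose r : ℝ) * expPoly r (z * y) * pdbPoly (n - r) 0 y
        = ∑ r ∈ range (n+1), (n.choose r : ℝ) *
            (∑ a ∈ range (r+1), (stirling2 r a : ℝ) * z^a * y^a) *
            (∑ b ∈ range (n-r+1), (stirling2 (n-r) b : ℝ) * derang b * y^b) from
      Finset.sum_congr rfl fun r _ => by
        unfold expPoly pdbPoly pderang
        congr 1
        · congr 1
          refine Finset.sum_congr rfl fun a _ => ?_
          rw [mul_pow]; ring
        · refine Finset.sum_congr rfl fun b _ => ?_
          rw [if_pos (Nat.zero_le b)]
          norm_num]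
    rw [hkey]
    refine Finset.sum_congr rfl fun k _ => ?_
    congr 1
    refine Finset.sum_congr rfl fun j _ => by ring
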